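/- Let a, b, c, d be real numbers with ac ≠ 0, x_A = −b/a, x_B = −d/c, and suppose Δ_Δ := c² − a²(cx_A + d) > 0 and B(x_A) := cx_A + d > 0. Then the circle C₀ = {z ∈ ℂ : |z − x_B| = |x_A − x_B|} is entirely contained in the strip S₀ = {z : |Re z − x_A| ≤ |2c/a²| and c(Re z − x_A) ≤ 0}. -/

import Mathlib

theorem stmt_9 (a b c d : ℝ) (h : a * c ≠ 0)
    (hΔΔ : 0 < c ^ 2 - a ^ 2 * (c * (-b / a) + d))
    (hB : 0 < c * (-b / a) + d) :
    {z : ℂ | ‖z - ((-d / c : ℝ) : ℂ)‖ = |(-b / a) - (-d / c)|} ⊆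
      {z : ℂ | |z.re - (-b / a)| ≤ |2 * c / a ^ 2| ∧ c * (z.re - (-b / a)) ≤ 0} := by
  have ha : a ≠ 0 := fun h' => h (by simp [h'])
  have hc : c ≠ 0 := fun h' => h (by simp [h'])
  have ha2 : 0 < a ^ 2 := by positivity
  have hcabs : 0 < |c| := abs_pos.mpr hc
  intro z hz
  simp only [Set.mem_setOf_eq] at hz ⊢
  have h1 : |z.re - (-d / c)| ≤ |(-b / a) - (-d / c)| := by
    calc |z.re - (-d / c)| = |(z - ((-d / c : ℝ) : ℂ)).re| := by simp
    _ ≤ ‖z - ((-d / c : ℝ) : ℂ)‖ := Complex.abs_re_le_norm _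
    _ = |(-b / a) - (-d / c)| := hz
  have hkey : -b / a - (-d / c) = (c * (-b / a) + d) / c := by field_simp; ring
  rw [hkey] at h1
  have h2 : |c * z.re + d| ≤ c * (-b / a) + d := by
    have h1' := mul_le_mul_of_nonneg_right h1 (abs_nonneg c)
    rw [← abs_mul, ← abs_mul] at h1'
    have e1 : (z.re - -d / c) * c = c * z.re + d := by field_simp; ring
    have e2 : (c * (-b / a) + d) / c * c = c * (-b / a) + d := div_mul_cancel₀ _ hc
    rwa [e1, e2, abs_of_pos hB] at h1'
  rw [abs_le] at h2
  obtain ⟨h2l, h2r⟩ := h2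
  have hid : c * (z.re - (-b / a)) = (c * z.re + d) - (c * (-b / a) + d) := by ring
  refine ⟨?_, by rw [hid]; linarith⟩
  have h3 : |c| * |z.re - (-b / a)| ≤ 2 * (c * (-b / a) + d) := by
    rw [← abs_mul, abs_le]
    constructor <;> rw [hid] <;> linarith
  have habs2 : |2 * c / a ^ 2| = 2 * |c| / a ^ 2 := by
    rw [abs_div, abs_mul]
    simp [abs_of_pos ha2]
  rw [habs2, le_div_iff₀ ha2]
  nlinarith [mul_le_mul_of_nonneg_left h3 (le_of_lt ha2), sq_abs c,
    abs_nonneg (z.re - (-b / a))]
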